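/- If P ∈ ℚ[x_0,…,x_N] satisfies D_{K2}(P) = 0, then for every fixed x ∈ ℝ the value P(K_0(x,a), K_1(x,a), …, K_N(x,a)) is independent of a; that is, for all x, a, a′ ∈ ℝ one has P(K(x,a)) = P(K(x,a′)). -/

import Mathlib

/-- Generalized binomial coefficient `C(t, k) = t(t-1)⋯(t-k+1)/k!` of a real number. -/
noncomputable def genBinom (t : ℝ) (k : ℕ) : ℝ :=
  (∏ j ∈ Finset.range k, (t - j)) / (Nat.factorial k)

/-- The binary Kravchuk polynomial `K_n(x,a) = ∑_{i=0}^n (-1)^i C(x,i) C(a-x, n-i)`. -/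
noncomputable def K (n : ℕ) (x a : ℝ) : ℝ :=
  ∑ i ∈ Finset.range (n + 1), (-1 : ℝ) ^ i * genBinom x i * genBinom (a - x) (n - i)

/-- The variable `x_i` of `ℚ[x_0,…,x_N]` (for `i ≤ N`). -/
noncomputable def Xv (N : ℕ) (i : ℕ) : MvPolynomial (Fin (N + 1)) ℚ :=
  if h : i ≤ N then MvPolynomial.X ⟨i, Nat.lt_succ_of_le h⟩ else 0

/-- The second Kravchuk derivation: `D_{K2}(x_0)=0`,
`D_{K2}(x_m)=∑_{i=0}^{m-1} ((-1)^{m+1+i}/(m-i)) x_i`. -/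
noncomputable def DK2 (N : ℕ) :
    Derivation ℚ (MvPolynomial (Fin (N + 1)) ℚ) (MvPolynomial (Fin (N + 1)) ℚ) :=
  MvPolynomial.mkDerivation ℚ fun m : Fin (N + 1) =>
    ∑ i ∈ Finset.range (m : ℕ),
      MvPolynomial.C ((-1 : ℚ) ^ ((m : ℕ) + 1 + i) / (((m : ℕ) : ℚ) - (i : ℚ))) * Xv N i

/-- The coefficient appearing in the derivative of the Kravchuk polynomials. -/
noncomputable def cK (k i : ℕ) : ℝ := (-1) ^ (k + 1 + i) / ((k : ℝ) - (i : ℝ))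

lemma genBinom_zero (t : ℝ) : genBinom t 0 = 1 := by simp [genBinom]

lemma genBinom_succ (t : ℝ) (k : ℕ) :
    genBinom t (k + 1) = genBinom t k * (t - k) / (k + 1) := by
  simp only [genBinom, Finset.prod_range_succ, Nat.factorial_succ]
  push_cast
  rw [div_mul_eq_mul_div, div_div, mul_comm ((k:ℝ)+1)]

/-- The key linear-algebraic identity behind the derivative recursion. -/
lemma key_sum (k : ℕ) (v : ℕ → ℝ) :
    (∑ i ∈ Finset.range k, cK k i * (((i : ℝ) + 1) * v (i + 1) + ((i : ℝ) - (k : ℝ)) * v i)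
        + v k) * ((k : ℝ) + 1)⁻¹
      = ∑ i ∈ Finset.range (k + 1), cK (k + 1) i * v i := by
  have hsplit : ∑ i ∈ Finset.range k,
        cK k i * (((i : ℝ) + 1) * v (i + 1) + ((i : ℝ) - (k : ℝ)) * v i)
      = (∑ i ∈ Finset.range k, cK k i * ((i : ℝ) + 1) * v (i + 1))
        + ∑ i ∈ Finset.range k, cK k i * ((i : ℝ) - (k : ℝ)) * v i := by
    rw [← Finset.sum_add_distrib]; apply Finset.sum_congr rfl; intro i _; ring
  have h2 : (∑ i ∈ Finset.range k, cK k i * ((i : ℝ) - (k : ℝ)) * v i) + v k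
      = ∑ i ∈ Finset.range (k + 1), (-1 : ℝ) ^ (k + i) * v i := by
    rw [Finset.sum_range_succ]
    congr 1
    · apply Finset.sum_congr rfl; intro i hi
      have hik : i < k := Finset.mem_range.mp hi
      have hne : (k : ℝ) - (i : ℝ) ≠ 0 := by
        have : (i : ℝ) < (k : ℝ) := by exact_mod_cast hik
        linarith
      have hpow : (-1 : ℝ) ^ (k + 1 + i) = -(-1 : ℝ) ^ (k + i) := by
        rw [show k + 1 + i = (k + i) + 1 by ring, pow_succ]; ring
      rw [cK, hpow]
      field_simp
      ring
    · rw [show k + k = 2 * k by ring, pow_mul]; norm_num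
  rw [hsplit, add_assoc, h2]
  rw [Finset.sum_range_succ' (fun i => (-1 : ℝ) ^ (k + i) * v i) k,
    Finset.sum_range_succ' (fun i => cK (k + 1) i * v i) k]
  rw [← add_assoc, add_mul, add_mul, Finset.sum_mul, Finset.sum_mul, ← Finset.sum_add_distrib]
  congr 1
  · apply Finset.sum_congr rfl; intro i hi
    have hik : i < k := Finset.mem_range.mp hi
    have hne : (k : ℝ) - (i : ℝ) ≠ 0 := by
      have : (i : ℝ) < (k : ℝ) := by exact_mod_cast hik
      linarith
    have hne2 : (k : ℝ) + 1 ≠ 0 := by positivity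
    have hp1 : (-1 : ℝ) ^ (k + 1 + 1 + (i + 1)) = (-1 : ℝ) ^ (k + 1 + i) := by
      rw [show k + 1 + 1 + (i + 1) = (k + 1 + i) + 2 by ring, pow_add]; norm_num
    have hp2 : (-1 : ℝ) ^ (k + (i + 1)) = (-1 : ℝ) ^ (k + 1 + i) := by
      rw [show k + (i + 1) = k + 1 + i by ring]
    simp only [cK, hp1, hp2]
    push_cast
    have hne3 : (k : ℝ) + 1 - ((i : ℝ) + 1) ≠ 0 := by
      rw [show (k : ℝ) + 1 - ((i : ℝ) + 1) = (k : ℝ) - (i : ℝ) by ring]; exact hne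
    field_simp
    ring
  · simp only [cK]
    have hp : (-1 : ℝ) ^ (k + 1 + 1 + 0) = (-1 : ℝ) ^ (k + 0) := by
      rw [show k + 1 + 1 + 0 = (k + 0) + 2 by ring, pow_add]; norm_num
    rw [hp]
    push_cast
    ring

/-- Derivative of the generalized binomial coefficient `a ↦ C(a-x, k)`. -/
lemma hasDerivAt_genBinom_sub (x : ℝ) (k : ℕ) (a : ℝ) :
    HasDerivAt (fun a : ℝ => genBinom (a - x) k)
      (∑ i ∈ Finset.range k, cK k i * genBinom (a - x) i) a := by
  induction k with
  | zero =>
    simp only [Finset.range_zero, Finset.sum_empty]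
    have : (fun a : ℝ => genBinom (a - x) 0) = fun _ => (1 : ℝ) := by
      funext b; exact genBinom_zero _
    rw [this]; exact hasDerivAt_const a 1
  | succ k ih =>
    have h2 : HasDerivAt (fun a : ℝ => (a - x - k) * ((k : ℝ) + 1)⁻¹) (((k : ℝ) + 1)⁻¹) a := by
      simpa using (((hasDerivAt_id a).sub_const x).sub_const (k : ℝ)).mul_const (((k : ℝ) + 1)⁻¹)
    have h3 := ih.fun_mul h2
    have hfun : (fun a : ℝ => genBinom (a - x) k * ((a - x - k) * ((k : ℝ) + 1)⁻¹))
        = fun a : ℝ => genBinom (a - x) (k + 1) := by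
      funext b; rw [genBinom_succ, div_eq_mul_inv]; ring
    rw [hfun] at h3
    refine h3.congr_deriv (Eq.symm ?_)
    have hterm : ∀ i ∈ Finset.range k,
        cK k i * genBinom (a - x) i * (a - x - k)
          = cK k i * (((i : ℝ) + 1) * genBinom (a - x) (i + 1)
              + ((i : ℝ) - (k : ℝ)) * genBinom (a - x) i) := by
      intro i _
      have hg : ((i : ℝ) + 1) * genBinom (a - x) (i + 1) = genBinom (a - x) i * (a - x - i) := by
        rw [genBinom_succ]
        have : ((i : ℝ) + 1) ≠ 0 := by positivity
        field_simp
      rw [hg]; ring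
    calc ∑ i ∈ Finset.range (k + 1), cK (k + 1) i * genBinom (a - x) i
        = ((∑ i ∈ Finset.range k, cK k i * (((i : ℝ) + 1) * genBinom (a - x) (i + 1)
            + ((i : ℝ) - (k : ℝ)) * genBinom (a - x) i)) + genBinom (a - x) k)
            * ((k : ℝ) + 1)⁻¹ := (key_sum k _).symm
      _ = ((∑ i ∈ Finset.range k, cK k i * genBinom (a - x) i * (a - x - k))
            + genBinom (a - x) k) * ((k : ℝ) + 1)⁻¹ := by
          rw [Finset.sum_congr rfl hterm]
      _ = (∑ i ∈ Finset.range k, cK k i * genBinom (a - x) i) * ((a - x - k) * ((k : ℝ) + 1)⁻¹)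
            + genBinom (a - x) k * ((k : ℝ) + 1)⁻¹ := by
          rw [add_mul, Finset.sum_mul, Finset.sum_mul]
          congr 1
          exact Finset.sum_congr rfl fun i _ => by ring

lemma cK_shift {i j n : ℕ} (h : i + j < n) : cK (n - i) j = cK n (i + j) := by
  obtain ⟨e, rfl⟩ : ∃ e, n = i + e := ⟨n - i, by omega⟩
  have h1 : i + e - i = e := by omega
  have h2 : (-1 : ℝ) ^ (i + e + 1 + (i + j)) = (-1 : ℝ) ^ (e + 1 + j) := by
    rw [show i + e + 1 + (i + j) = (e + 1 + j) + 2 * i by ring, pow_add, pow_mul]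
    norm_num
  rw [cK, cK, h1, h2]
  congr 1
  push_cast
  ring

lemma reindex (n : ℕ) (C v : ℕ → ℝ) :
    ∑ i ∈ Finset.range (n + 1), C i * ∑ j ∈ Finset.range (n - i), cK (n - i) j * v j
      = ∑ m ∈ Finset.range n, cK n m * ∑ i ∈ Finset.range (m + 1), C i * v (m - i) := by
  simp_rw [Finset.mul_sum]
  rw [Finset.sum_sigma', Finset.sum_sigma']
  apply Finset.sum_nbij' (i := fun p => ⟨p.1 + p.2, p.1⟩) (j := fun p => ⟨p.2, p.1 - p.2⟩)
  · rintro ⟨i, j⟩ hm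
    simp only [Finset.mem_sigma, Finset.mem_range] at hm ⊢
    omega
  · rintro ⟨m, i⟩ hm
    simp only [Finset.mem_sigma, Finset.mem_range] at hm ⊢
    omega
  · rintro ⟨i, j⟩ hm
    simp only [Finset.mem_sigma, Finset.mem_range] at hm
    exact Sigma.ext rfl (heq_of_eq (show i + j - i = j by omega))
  · rintro ⟨m, i⟩ hm
    simp only [Finset.mem_sigma, Finset.mem_range] at hm
    exact Sigma.ext (show i + (m - i) = m by omega) (HEq.refl _)
  · rintro ⟨i, j⟩ hm
    simp only [Finset.mem_sigma, Finset.mem_range] at hm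
    have h : i + j < n := by omega
    have h1 : i + j - i = j := by omega
    simp only []
    rw [cK_shift h, h1]
    ring

/-- Derivative of the Kravchuk polynomial `a ↦ K_n(x,a)`. -/
lemma hasDerivAt_K (n : ℕ) (x a : ℝ) :
    HasDerivAt (fun a : ℝ => K n x a)
      (∑ m ∈ Finset.range n, cK n m * K m x a) a := by
  have h : HasDerivAt (fun a : ℝ => K n x a)
      (∑ i ∈ Finset.range (n + 1), (-1 : ℝ) ^ i * genBinom x i *
        ∑ j ∈ Finset.range (n - i), cK (n - i) j * genBinom (a - x) j) a := by
    have hs := HasDerivAt.fun_sum (fun i (_ : i ∈ Finset.range (n + 1)) =>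
      (hasDerivAt_genBinom_sub x (n - i) a).const_mul ((-1 : ℝ) ^ i * genBinom x i))
    simpa [K, mul_assoc] using hs
  have := reindex n (fun i => (-1 : ℝ) ^ i * genBinom x i) (fun j => genBinom (a - x) j)
  rw [this] at h
  simpa [K] using h

open MvPolynomial in
/-- Chain rule: differentiating `P(K(x,a))` in `a` applies the derivation `DK2`. -/
lemma hasDerivAt_aeval_K (N : ℕ) (x : ℝ) (P : MvPolynomial (Fin (N + 1)) ℚ) (a : ℝ) :
    HasDerivAt (fun a : ℝ => aeval (fun i : Fin (N + 1) => K (i : ℕ) x a) P)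
      (aeval (fun i : Fin (N + 1) => K (i : ℕ) x a) (DK2 N P)) a := by
  induction P using MvPolynomial.induction_on with
  | C q =>
    have h0 : DK2 N (C q) = 0 := by
      rw [show (C q : MvPolynomial (Fin (N + 1)) ℚ) = algebraMap ℚ _ q from rfl]
      exact Derivation.map_algebraMap _ q
    rw [h0]
    simpa using hasDerivAt_const a ((q : ℝ))
  | add p q hp hq =>
    simpa [map_add] using hp.fun_add hq
  | mul_X p m hp =>
    have hK : HasDerivAt (fun a : ℝ => K (m : ℕ) x a)
        (aeval (fun i : Fin (N + 1) => K (i : ℕ) x a) (DK2 N (X m))) a := by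
      have hX : DK2 N (X m) = ∑ i ∈ Finset.range (m : ℕ),
          MvPolynomial.C ((-1 : ℚ) ^ ((m : ℕ) + 1 + i) / (((m : ℕ) : ℚ) - (i : ℚ))) * Xv N i :=
        MvPolynomial.mkDerivation_X _ _ _
      have haev : aeval (fun i : Fin (N + 1) => K (i : ℕ) x a) (DK2 N (X m))
          = ∑ i ∈ Finset.range (m : ℕ), cK (m : ℕ) i * K i x a := by
        rw [hX, map_sum]
        apply Finset.sum_congr rfl
        intro i hi
        have him : i < (m : ℕ) := Finset.mem_range.mp hi
        have hiN : i ≤ N := by have := m.isLt; omega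
        rw [map_mul, Xv, dif_pos hiN, aeval_X, aeval_C]
        have : ((algebraMap ℚ ℝ) ((-1 : ℚ) ^ ((m : ℕ) + 1 + i) / (((m : ℕ) : ℚ) - (i : ℚ))))
            = cK (m : ℕ) i := by
          rw [eq_ratCast (algebraMap ℚ ℝ)]
          rw [cK]
          push_cast
          ring
        rw [this]
      rw [haev]
      exact hasDerivAt_K (m : ℕ) x a
    have h := hp.fun_mul hK
    have hfun : (fun a : ℝ => aeval (fun i : Fin (N + 1) => K (i : ℕ) x a) p * K (m : ℕ) x a)
        = fun a : ℝ => aeval (fun i : Fin (N + 1) => K (i : ℕ) x a) (p * X m) := by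
      funext b; rw [map_mul, aeval_X]
    rw [hfun] at h
    refine h.congr_deriv (Eq.symm ?_)
    rw [Derivation.leibniz, map_add, smul_eq_mul, smul_eq_mul, map_mul, map_mul, aeval_X]
    ring

/-- If `D_{K2}(P) = 0` then `P(K(x,a))` does not depend on `a`. -/
theorem aeval_kravchuk_const_of_DK2_eq_zero (N : ℕ) (P : MvPolynomial (Fin (N + 1)) ℚ)
    (hP : DK2 N P = 0) (x a a' : ℝ) :
    MvPolynomial.aeval (fun i : Fin (N + 1) => K (i : ℕ) x a) P
      = MvPolynomial.aeval (fun i : Fin (N + 1) => K (i : ℕ) x a') P := by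
  have hd : ∀ b : ℝ,
      HasDerivAt (fun a : ℝ => MvPolynomial.aeval (fun i : Fin (N + 1) => K (i : ℕ) x a) P) 0 b := by
    intro b
    have h := hasDerivAt_aeval_K N x P b
    rwa [hP, map_zero] at h
  exact is_const_of_deriv_eq_zero (fun b => (hd b).differentiableAt) (fun b => (hd b).deriv) a a'
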